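/- Let p be a prime and d ≥ 2 an integer. Write d = d_p · d_{p'} where d_p is the largest power of p dividing d and d_{p'} = d/d_p. Then μ*(d,p) = μ*(d_p, p) + μ*(d_{p'}, p). -/

import Mathlib

open Module

/-- `μ*(d,p)`: the smallest dimension of `[V,x] = range (x - id)` over all linear
automorphisms `x` of order exactly `d` of finite-dimensional vector spaces over `𝔽_p`
(with the convention `μ*(1,p) = 0`). -/
noncomputable def mustar (p d : ℕ) : ℕ :=
  sInf {μ : ℕ | ∃ (n : ℕ) (x : (Fin n → ZMod p) ≃ₗ[ZMod p] (Fin n → ZMod p)),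
    orderOf x = d ∧
    finrank (ZMod p) (LinearMap.range
      ((x : (Fin n → ZMod p) →ₗ[ZMod p] (Fin n → ZMod p)) - LinearMap.id)) = μ}

open LinearMap

section Helpers

variable {K : Type*} [Field K] {V : Type*} [AddCommGroup V] [Module K V]

lemma coePow (x : V ≃ₗ[K] V) (k : ℕ) :
    ((x ^ k : V ≃ₗ[K] V) : V →ₗ[K] V) = (x : V →ₗ[K] V) ^ k := by
  induction k with
  | zero => rfl
  | succ n ih => rw [pow_succ, pow_succ, ← ih]; rfl

lemma coeOne : ((1 : V ≃ₗ[K] V) : V →ₗ[K] V) = 1 := rfl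

lemma equivPowApply (x : V ≃ₗ[K] V) (k : ℕ) (v : V) :
    (x ^ k) v = ((x : V →ₗ[K] V) ^ k) v := by
  rw [← coePow]; rfl

lemma orderOf_eq_of_pow_iff {G H : Type*} [Monoid G] [Monoid H] (a : G) (b : H)
    (h : ∀ k : ℕ, a ^ k = 1 ↔ b ^ k = 1) : orderOf a = orderOf b :=
  Nat.dvd_antisymm
    (orderOf_dvd_of_pow_eq_one ((h _).mpr (pow_orderOf_eq_one b)))
    (orderOf_dvd_of_pow_eq_one ((h _).mp (pow_orderOf_eq_one a)))

/-- semisimple disjointness -/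
lemma ker_inf_range_eq_bot (g : V →ₗ[K] V) (c : ℕ) (hc : (c : K) ≠ 0)
    (hg : g ^ c = 1) : ker (g - 1) ⊓ range (g - 1) = ⊥ := by
  rw [eq_bot_iff]
  rintro v ⟨hk, hr⟩
  obtain ⟨w, hw⟩ := hr
  have hgv : g v = v := by
    have : (g - 1) v = 0 := hk
    simpa [sub_eq_zero] using this
  have hpow : ∀ i : ℕ, (g ^ i) v = v := by
    intro i
    induction i with
    | zero => rfl
    | succ j ih => rw [pow_succ, Module.End.mul_apply, hgv]; exact ih
  have hS : (∑ i ∈ Finset.range c, g ^ i) * (g - 1) = 0 := by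
    rw [geom_sum_mul, hg, sub_self]
  have h1 : (∑ i ∈ Finset.range c, g ^ i) v = 0 := by
    rw [← hw, ← Module.End.mul_apply, hS, LinearMap.zero_apply]
  have h2 : (∑ i ∈ Finset.range c, g ^ i) v = (c : K) • v := by
    rw [LinearMap.sum_apply]
    simp only [hpow]
    rw [Finset.sum_const, Finset.card_range, ← Nat.cast_smul_eq_nsmul K]
  rw [h2] at h1
  simpa [hc] using (smul_eq_zero.mp h1)

end Helpers

section Transport

variable {p : ℕ} [Fact p.Prime]

lemma rank_mem_mustarSet {V : Type*} [AddCommGroup V] [Module (ZMod p) V]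
    [FiniteDimensional (ZMod p) V] (y : V ≃ₗ[ZMod p] V) :
    finrank (ZMod p) (range ((y : V →ₗ[ZMod p] V) - LinearMap.id)) ∈
      {μ : ℕ | ∃ (n : ℕ) (x : (Fin n → ZMod p) ≃ₗ[ZMod p] (Fin n → ZMod p)),
        orderOf x = orderOf y ∧
        finrank (ZMod p) (LinearMap.range
          ((x : (Fin n → ZMod p) →ₗ[ZMod p] (Fin n → ZMod p)) - LinearMap.id)) = μ} := by
  classical
  set K := ZMod p
  set n := finrank K V with hn
  let e : V ≃ₗ[K] (Fin n → K) := (Module.finBasis K V).equivFun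
  let y' : (Fin n → K) ≃ₗ[K] (Fin n → K) := (e.symm.trans y).trans e
  have happly : ∀ (k : ℕ) (w : Fin n → K), (y' ^ k) w = e ((y ^ k) (e.symm w)) := by
    intro k
    induction k with
    | zero => intro w; simp
    | succ j ih =>
      intro w
      have h1 : (y' ^ (j + 1)) w = (y' ^ j) (y' w) := by
        rw [pow_succ]; rfl
      have h2 : (y ^ (j + 1)) (e.symm w) = (y ^ j) (y (e.symm w)) := by
        rw [pow_succ]; rfl
      rw [h1, h2, ih]
      have : e.symm (e (y (e.symm w))) = y (e.symm w) := e.symm_apply_apply _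
      show e ((y ^ j) (e.symm (y' w))) = _
      congr 1
      show (y ^ j) (e.symm (e (y (e.symm w)))) = (y ^ j) (y (e.symm w))
      rw [this]
  have hiff : ∀ k : ℕ, y' ^ k = 1 ↔ y ^ k = 1 := by
    intro k
    constructor
    · intro h
      refine LinearEquiv.ext fun v => ?_
      have h2 := happly k (e v)
      rw [h, e.symm_apply_apply] at h2
      have h3 : e v = e ((y ^ k) v) := h2
      have h4 := e.injective h3
      show (y ^ k) v = v
      exact h4.symm
    · intro h
      refine LinearEquiv.ext fun w => ?_
      rw [happly k w, h]
      show e (e.symm w) = w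
      rw [e.apply_symm_apply]
  have hord : orderOf y' = orderOf y := orderOf_eq_of_pow_iff _ _ hiff
  have hcoe : ((y' : (Fin n → K) →ₗ[K] (Fin n → K)) - LinearMap.id) =
      (e : V →ₗ[K] (Fin n → K)) ∘ₗ (((y : V →ₗ[K] V) - LinearMap.id) ∘ₗ
        (e.symm : (Fin n → K) →ₗ[K] V)) := by
    refine LinearMap.ext fun w => ?_
    simp only [LinearMap.sub_apply, LinearMap.id_apply, LinearMap.comp_apply,
      LinearEquiv.coe_coe, map_sub]
    show y' w - w = e (y (e.symm w)) - e (e.symm w)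
    rw [e.apply_symm_apply]
    rfl
  have hrange : range ((y' : (Fin n → K) →ₗ[K] (Fin n → K)) - LinearMap.id) =
      Submodule.map (e : V →ₗ[K] (Fin n → K)) (range ((y : V →ₗ[K] V) - LinearMap.id)) := by
    rw [hcoe, LinearMap.range_comp, LinearMap.range_comp, LinearEquiv.range, Submodule.map_top]
  have hfr : finrank K (range ((y' : (Fin n → K) →ₗ[K] (Fin n → K)) - LinearMap.id)) =
      finrank K (range ((y : V →ₗ[K] V) - LinearMap.id)) := by
    rw [hrange]
    exact LinearEquiv.finrank_map_eq e _
  exact ⟨n, y', hord, hfr⟩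

lemma mustar_le_rank {V : Type*} [AddCommGroup V] [Module (ZMod p) V]
    [FiniteDimensional (ZMod p) V] (y : V ≃ₗ[ZMod p] V) :
    mustar p (orderOf y) ≤ finrank (ZMod p) (range ((y : V →ₗ[ZMod p] V) - LinearMap.id)) :=
  Nat.sInf_le (rank_mem_mustarSet y)

end Transport

section Restrict

variable {K : Type*} [Field K] {V : Type*} [AddCommGroup V] [Module K V]
  [FiniteDimensional K V]

lemma map_eq_of_le (x : V ≃ₗ[K] V) (U : Submodule K V)
    (hsub : ∀ v ∈ U, (x : V →ₗ[K] V) v ∈ U) :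
    Submodule.map (x : V →ₗ[K] V) U = U := by
  apply Submodule.eq_of_le_of_finrank_le
  · exact Submodule.map_le_iff_le_comap.mpr (fun v hv => hsub v hv)
  · rw [LinearEquiv.finrank_map_eq x U]

noncomputable def restrictAuto (x : V ≃ₗ[K] V) (U : Submodule K V)
    (hsub : ∀ v ∈ U, (x : V →ₗ[K] V) v ∈ U) : U ≃ₗ[K] U :=
  (x.submoduleMap U).trans (LinearEquiv.ofEq _ _ (map_eq_of_le x U hsub))

lemma restrictAuto_apply (x : V ≃ₗ[K] V) (U : Submodule K V)
    (hsub : ∀ v ∈ U, (x : V →ₗ[K] V) v ∈ U) (v : U) :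
    ((restrictAuto x U hsub) v : V) = x (v : V) := rfl

lemma restrictAuto_pow_apply (x : V ≃ₗ[K] V) (U : Submodule K V)
    (hsub : ∀ v ∈ U, (x : V →ₗ[K] V) v ∈ U) (k : ℕ) (v : U) :
    (((restrictAuto x U hsub) ^ k) v : V) = (x ^ k) (v : V) := by
  induction k generalizing v with
  | zero => rfl
  | succ j ih =>
    have h1 : ((restrictAuto x U hsub) ^ (j + 1)) v =
        ((restrictAuto x U hsub) ^ j) ((restrictAuto x U hsub) v) := by
      rw [pow_succ]; rfl
    have h2 : (x ^ (j + 1)) (v : V) = (x ^ j) (x (v : V)) := by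
      rw [pow_succ]; rfl
    rw [h1, h2, ih ((restrictAuto x U hsub) v), restrictAuto_apply]

end Restrict

section Upper

variable {p : ℕ} [Fact p.Prime]

def mustarSet (p c : ℕ) : Set ℕ :=
  {μ : ℕ | ∃ (n : ℕ) (x : (Fin n → ZMod p) ≃ₗ[ZMod p] (Fin n → ZMod p)),
    orderOf x = c ∧
    finrank (ZMod p) (LinearMap.range
      ((x : (Fin n → ZMod p) →ₗ[ZMod p] (Fin n → ZMod p)) - LinearMap.id)) = μ}

lemma mustar_eq_sInf (p c : ℕ) : mustar p c = sInf (mustarSet p c) := rfl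

lemma mustarSet_nonempty (p c : ℕ) [Fact p.Prime] (hc : 1 ≤ c) :
    (mustarSet p c).Nonempty := by
  classical
  rcases eq_or_lt_of_le hc with h1 | h2
  · refine ⟨_, 0, 1, ?_, rfl⟩
    rw [orderOf_one, h1]
  · -- c ≥ 2
    set K := ZMod p
    set σ := finRotate c with hσ
    have hordσ : orderOf σ = c := by
      rw [← Equiv.Perm.lcm_cycleType, cycleType_finRotate_of_le h2,
        Multiset.lcm_singleton, normalize_eq]
    set y : (Fin c → K) ≃ₗ[K] (Fin c → K) := LinearEquiv.funCongrLeft K K σ with hy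
    have happly : ∀ (k : ℕ) (f : Fin c → K) (z : Fin c), (y ^ k) f z = f ((σ ^ k) z) := by
      intro k
      induction k with
      | zero => intro f z; rfl
      | succ j ih =>
        intro f z
        have h1 : (y ^ (j + 1)) f = (y ^ j) (y f) := by rw [pow_succ]; rfl
        rw [h1, ih]
        have h2 : (σ ^ (j + 1)) z = σ ((σ ^ j) z) := by rw [pow_succ']; rfl
        rw [h2]
        rfl
    have hiff : ∀ k : ℕ, y ^ k = 1 ↔ σ ^ k = 1 := by
      intro k
      constructor
      · intro h
        refine Equiv.ext fun z => ?_
        show (σ ^ k) z = z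
        by_contra hne
        have hz := happly k (Pi.single ((σ ^ k) z) (1 : K) : Fin c → K) z
        rw [h] at hz
        have hz' : (Pi.single ((σ ^ k) z) (1 : K) : Fin c → K) z =
            (Pi.single ((σ ^ k) z) (1 : K) : Fin c → K) ((σ ^ k) z) := hz
        rw [Pi.single_eq_same] at hz'
        rw [Pi.single_eq_of_ne (fun hh => hne hh.symm)] at hz'
        exact one_ne_zero hz'.symm
      · intro h
        refine LinearEquiv.ext fun f => ?_
        funext z
        rw [happly k f z, h]
        rfl
    have hord : orderOf y = c := by
      rw [orderOf_eq_of_pow_iff y σ hiff, hordσ]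
    exact ⟨_, c, y, hord, rfl⟩

end Upper

section Prod

variable {p : ℕ} [Fact p.Prime]

lemma finrank_prod_submodule {K : Type*} [Field K] {M M₂ : Type*} [AddCommGroup M]
    [AddCommGroup M₂] [Module K M] [Module K M₂] [FiniteDimensional K M]
    [FiniteDimensional K M₂] (A : Submodule K M) (B : Submodule K M₂) :
    finrank K (A.prod B) = finrank K A + finrank K B := by
  have e : ↥(A.prod B) ≃ₗ[K] (↥A × ↥B) :=
    { toFun := fun v => (⟨(v : M × M₂).1, v.2.1⟩, ⟨(v : M × M₂).2, v.2.2⟩)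
      invFun := fun ab => ⟨((ab.1 : M), (ab.2 : M₂)), ⟨ab.1.2, ab.2.2⟩⟩
      map_add' := fun v w => rfl
      map_smul' := fun r v => rfl
      left_inv := fun v => rfl
      right_inv := fun ab => rfl }
  rw [LinearEquiv.finrank_eq e, Module.finrank_prod]

lemma mustar_mul_le (a b : ℕ) (ha : 1 ≤ a) (hb : 1 ≤ b) (hab : Nat.Coprime a b) :
    mustar p (a * b) ≤ mustar p a + mustar p b := by
  classical
  set K := ZMod p
  obtain ⟨n₁, x₁, hx₁, hr₁⟩ := Nat.sInf_mem (mustarSet_nonempty p a ha)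
  obtain ⟨n₂, x₂, hx₂, hr₂⟩ := Nat.sInf_mem (mustarSet_nonempty p b hb)
  set y : ((Fin n₁ → K) × (Fin n₂ → K)) ≃ₗ[K] ((Fin n₁ → K) × (Fin n₂ → K)) :=
    x₁.prodCongr x₂ with hy
  have happly : ∀ (k : ℕ) (v : (Fin n₁ → K) × (Fin n₂ → K)),
      (y ^ k) v = ((x₁ ^ k) v.1, (x₂ ^ k) v.2) := by
    intro k
    induction k with
    | zero => intro v; rfl
    | succ j ih =>
      intro v
      have h1 : (y ^ (j + 1)) v = (y ^ j) (y v) := by rw [pow_succ]; rfl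
      have h2 : (x₁ ^ (j + 1)) v.1 = (x₁ ^ j) (x₁ v.1) := by rw [pow_succ]; rfl
      have h3 : (x₂ ^ (j + 1)) v.2 = (x₂ ^ j) (x₂ v.2) := by rw [pow_succ]; rfl
      rw [h1, h2, h3, ih (y v)]
      rfl
  have hiff : ∀ k : ℕ, y ^ k = 1 ↔ (x₁ ^ k = 1 ∧ x₂ ^ k = 1) := by
    intro k
    constructor
    · intro h
      constructor
      · refine LinearEquiv.ext fun v => ?_
        have := happly k (v, 0)
        rw [h] at this
        exact (congrArg Prod.fst this).symm
      · refine LinearEquiv.ext fun w => ?_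
        have := happly k (0, w)
        rw [h] at this
        exact (congrArg Prod.snd this).symm
    · rintro ⟨h1, h2⟩
      refine LinearEquiv.ext fun v => ?_
      rw [happly k v, h1, h2]
      rfl
  have hord : orderOf y = a * b := by
    have hd1 : orderOf y ∣ a * b := by
      apply orderOf_dvd_of_pow_eq_one
      rw [hiff]
      constructor
      · rw [pow_mul, ← hx₁, pow_orderOf_eq_one, one_pow]
      · rw [mul_comm, pow_mul, ← hx₂, pow_orderOf_eq_one, one_pow]
    have hd2 : a * b ∣ orderOf y := by
      have h := (hiff (orderOf y)).mp (pow_orderOf_eq_one y)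
      have ha' : a ∣ orderOf y := hx₁ ▸ orderOf_dvd_of_pow_eq_one h.1
      have hb' : b ∣ orderOf y := hx₂ ▸ orderOf_dvd_of_pow_eq_one h.2
      exact hab.mul_dvd_of_dvd_of_dvd ha' hb'
    exact Nat.dvd_antisymm hd1 hd2
  have hcoe : ((y : ((Fin n₁ → K) × (Fin n₂ → K)) →ₗ[K] ((Fin n₁ → K) × (Fin n₂ → K)))
      - LinearMap.id) =
      LinearMap.prodMap ((x₁ : (Fin n₁ → K) →ₗ[K] (Fin n₁ → K)) - LinearMap.id)
        ((x₂ : (Fin n₂ → K) →ₗ[K] (Fin n₂ → K)) - LinearMap.id) := by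
    refine LinearMap.ext fun v => ?_
    simp only [LinearMap.sub_apply, LinearMap.id_apply, LinearMap.prodMap_apply]
    rfl
  have hrange : range ((y : ((Fin n₁ → K) × (Fin n₂ → K)) →ₗ[K]
      ((Fin n₁ → K) × (Fin n₂ → K))) - LinearMap.id) =
      Submodule.prod (range ((x₁ : (Fin n₁ → K) →ₗ[K] (Fin n₁ → K)) - LinearMap.id))
        (range ((x₂ : (Fin n₂ → K) →ₗ[K] (Fin n₂ → K)) - LinearMap.id)) := by
    rw [hcoe]
    apply le_antisymm
    · rintro ⟨v, w⟩ ⟨⟨v', w'⟩, hvw⟩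
      rw [Submodule.mem_prod]
      rw [LinearMap.prodMap_apply] at hvw
      exact ⟨⟨v', congrArg Prod.fst hvw⟩, ⟨w', congrArg Prod.snd hvw⟩⟩
    · rintro ⟨v, w⟩ hvw
      rw [Submodule.mem_prod] at hvw
      obtain ⟨⟨v', hv'⟩, ⟨w', hw'⟩⟩ := hvw
      exact ⟨(v', w'), by rw [LinearMap.prodMap_apply, hv', hw']⟩
  calc mustar p (a * b) = mustar p (orderOf y) := by rw [hord]
    _ ≤ _ := mustar_le_rank y
    _ = mustar p a + mustar p b := by
        rw [hrange, finrank_prod_submodule, hr₁, hr₂, mustar_eq_sInf, mustar_eq_sInf]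

end Prod

section MoreHelpers

variable {K : Type*} [Field K] {V : Type*} [AddCommGroup V] [Module K V]

lemma fixedPow (h : V →ₗ[K] V) {v : V} (hv : h v = v) : ∀ i : ℕ, (h ^ i) v = v := by
  intro i
  induction i with
  | zero => rfl
  | succ j ih => rw [pow_succ, Module.End.mul_apply, hv]; exact ih

lemma commSub (f : V →ₗ[K] V) (i j : ℕ) :
    (f ^ i - 1) * f ^ j = f ^ j * (f ^ i - 1) := by
  rw [sub_mul, mul_sub, one_mul, mul_one, pow_mul_comm]

lemma commSubSub (f : V →ₗ[K] V) (i j : ℕ) :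
    (f ^ i - 1) * (f ^ j - 1) = (f ^ j - 1) * (f ^ i - 1) :=
  (((Commute.pow_pow_self f i j).sub_left (Commute.one_left _)).sub_right
    (Commute.one_right _)).eq

lemma sub_one_pow_prime_pow {p : ℕ} [Fact p.Prime] {M : Type*} [AddCommGroup M]
    [Module (ZMod p) M] (u : Module.End (ZMod p) M) (e : ℕ) :
    (u - 1) ^ (p ^ e) = u ^ (p ^ e) - 1 := by
  have hpoly : ((Polynomial.X - 1 : Polynomial (ZMod p)) ^ (p ^ e)) =
      Polynomial.X ^ (p ^ e) - 1 := by
    simpa using sub_pow_char_pow (R := Polynomial (ZMod p)) Polynomial.X 1 e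
  have h := congrArg (Polynomial.aeval u) hpoly
  simpa using h

end MoreHelpers

section Lower

variable {p : ℕ} [Fact p.Prime]

set_option maxHeartbeats 1600000 in
lemma lower_bound {a m n : ℕ} (ha : 1 ≤ a) (hm : 1 ≤ m) (hpm : ¬ p ∣ m)
    (x : (Fin n → ZMod p) ≃ₗ[ZMod p] (Fin n → ZMod p))
    (hx : orderOf x = p ^ a * m) :
    mustar p (p ^ a) + mustar p m ≤
      finrank (ZMod p) (range
        ((x : (Fin n → ZMod p) →ₗ[ZMod p] (Fin n → ZMod p)) - LinearMap.id)) := by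
  classical
  have hp : p.Prime := Fact.out
  set f : (Fin n → ZMod p) →ₗ[ZMod p] (Fin n → ZMod p) :=
    (x : (Fin n → ZMod p) →ₗ[ZMod p] (Fin n → ZMod p)) with hf
  set P : ℕ := p ^ a with hP
  set d : ℕ := P * m with hd
  show mustar p P + mustar p m ≤ finrank (ZMod p) ↥(range (f - 1))
  have hP0 : 0 < P := pow_pos hp.pos a
  have hm0 : 0 < m := hm
  have hd0 : 0 < d := Nat.mul_pos hP0 hm0
  have hxd : x ^ d = 1 := by rw [← hx]; exact pow_orderOf_eq_one x
  have hfd : f ^ d = 1 := by rw [hf, ← coePow, hxd]; rfl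
  have hxdvd : ∀ j : ℕ, x ^ j = 1 → d ∣ j := fun j hj => hx ▸ orderOf_dvd_of_pow_eq_one hj
  have hmK : (m : ZMod p) ≠ 0 := by
    rw [Ne, ZMod.natCast_eq_zero_iff]
    exact hpm
  set g : (Fin n → ZMod p) →ₗ[ZMod p] (Fin n → ZMod p) := f ^ P with hg
  have hgm : g ^ m = 1 := by rw [hg, ← pow_mul, ← hd, hfd]
  set V0 : Submodule (ZMod p) (Fin n → ZMod p) := ker (g - 1) with hV0
  set V1 : Submodule (ZMod p) (Fin n → ZMod p) := range (g - 1) with hV1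
  have hdisj : V0 ⊓ V1 = ⊥ := ker_inf_range_eq_bot g m hmK hgm
  have htop : V0 ⊔ V1 = ⊤ := by
    apply Submodule.eq_top_of_finrank_eq
    have h1 := Submodule.finrank_sup_add_finrank_inf_eq V0 V1
    rw [hdisj, finrank_bot, add_zero] at h1
    have h2 : finrank (ZMod p) ↥V1 + finrank (ZMod p) ↥V0 =
        finrank (ZMod p) (Fin n → ZMod p) :=
      LinearMap.finrank_range_add_finrank_ker (g - 1)
    omega
  have hglue : ∀ (h : (Fin n → ZMod p) →ₗ[ZMod p] (Fin n → ZMod p)),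
      (∀ v ∈ V0, h v = v) → (∀ v ∈ V1, h v = v) → ∀ v, h v = v := by
    intro h h0 h1 v
    have hv : v ∈ V0 ⊔ V1 := htop ▸ Submodule.mem_top
    obtain ⟨v0, hv0, v1, hv1, rfl⟩ := Submodule.mem_sup.mp hv
    rw [map_add, h0 v0 hv0, h1 v1 hv1]
  have hcommf : (g - 1) * f = f * (g - 1) := by
    have hc := commSub f P 1
    rw [pow_one] at hc
    rw [hg]
    exact hc
  have hsub0 : ∀ v ∈ V0, f v ∈ V0 := by
    intro v hv
    have hv' : (g - 1) v = 0 := hv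
    show (g - 1) (f v) = 0
    have h1 : (g - 1) (f v) = ((g - 1) * f) v := rfl
    rw [h1, hcommf]
    show f ((g - 1) v) = 0
    rw [hv', map_zero]
  have hsub1 : ∀ v ∈ V1, f v ∈ V1 := by
    intro v hv
    obtain ⟨w, hw⟩ := hv
    refine ⟨f w, ?_⟩
    have h1 : (g - 1) (f w) = ((g - 1) * f) w := rfl
    rw [h1, hcommf]
    show f ((g - 1) w) = f v
    rw [hw]
  have hordxP : orderOf (x ^ P) = m := by
    rw [orderOf_pow' x hP0.ne', hx]
    have hgcd : Nat.gcd d P = P := by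
      rw [hd]
      have h1 : Nat.gcd (P * m) (P * 1) = P * Nat.gcd m 1 := Nat.gcd_mul_left P m 1
      simpa using h1
    rw [hgcd, hd, Nat.mul_div_cancel_left m hP0]
  have hV1rank : mustar p m ≤ finrank (ZMod p) ↥V1 := by
    rw [mustar_eq_sInf]
    refine Nat.sInf_le ⟨n, x ^ P, hordxP, ?_⟩
    have hcoe : ((x ^ P : (Fin n → ZMod p) ≃ₗ[ZMod p] (Fin n → ZMod p)) :
        (Fin n → ZMod p) →ₗ[ZMod p] (Fin n → ZMod p)) - LinearMap.id = g - 1 := by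
      rw [coePow]
      rfl
    rw [hcoe]
  -- injectivity of f - 1 on V1
  have hker1 : ker (f - 1) ⊓ V1 = ⊥ := by
    rw [eq_bot_iff]
    rintro v ⟨hkv, hrv⟩
    have hfv : f v = v := by
      have h1 : (f - 1) v = 0 := hkv
      rw [LinearMap.sub_apply] at h1
      have := sub_eq_zero.mp h1
      simpa using this
    have hgv : g v = v := by rw [hg]; exact fixedPow f hfv P
    have hv0 : v ∈ V0 := by
      show (g - 1) v = 0
      rw [LinearMap.sub_apply, hgv]
      simp
    exact hdisj ▸ Submodule.mem_inf.mpr ⟨hv0, hrv⟩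
  have hfr1 : finrank (ZMod p) ↥(Submodule.map (f - 1) V1) = finrank (ZMod p) ↥V1 := by
    have h2 := LinearMap.finrank_range_add_finrank_ker ((f - 1).domRestrict V1)
    rw [LinearMap.range_domRestrict] at h2
    have hker0 : ker ((f - 1).domRestrict V1) = ⊥ := by
      rw [eq_bot_iff]
      rintro ⟨v, hv⟩ hkv
      have h3 : (f - 1) v = 0 := hkv
      have h4 : v ∈ ker (f - 1) ⊓ V1 := ⟨h3, hv⟩
      rw [hker1] at h4
      have h5 : v = 0 := h4
      exact Submodule.mem_bot _ |>.mpr (Subtype.ext h5)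
    rw [hker0, finrank_bot, add_zero] at h2
    exact h2
  set M0 : Submodule (ZMod p) (Fin n → ZMod p) := Submodule.map (f - 1) V0 with hM0
  set M1 : Submodule (ZMod p) (Fin n → ZMod p) := Submodule.map (f - 1) V1 with hM1
  have him0le : M0 ≤ V0 := by
    rw [hM0, Submodule.map_le_iff_le_comap]
    intro v hv
    show (f - 1) v ∈ V0
    rw [LinearMap.sub_apply]
    exact Submodule.sub_mem V0 (hsub0 v hv) hv
  have him1le : M1 ≤ V1 := by
    rw [hM1, Submodule.map_le_iff_le_comap]
    intro v hv
    show (f - 1) v ∈ V1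
    rw [LinearMap.sub_apply]
    exact Submodule.sub_mem V1 (hsub1 v hv) hv
  have hchain : finrank (ZMod p) ↥M0 + finrank (ZMod p) ↥V1 ≤
      finrank (ZMod p) ↥(range (f - 1)) := by
    have hle : M0 ⊔ M1 ≤ range (f - 1) :=
      sup_le LinearMap.map_le_range LinearMap.map_le_range
    have h1 := Submodule.finrank_sup_add_finrank_inf_eq M0 M1
    have h2 : M0 ⊓ M1 = ⊥ := by
      rw [eq_bot_iff, ← hdisj]
      exact inf_le_inf him0le him1le
    rw [h2, finrank_bot, add_zero] at h1
    have h3 := Submodule.finrank_mono hle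
    omega
  -- the restriction of x to V0
  set y₀ : ↥V0 ≃ₗ[ZMod p] ↥V0 := restrictAuto x V0 hsub0 with hy₀
  have hy₀pow : ∀ (k : ℕ) (v : ↥V0), ((y₀ ^ k) v : Fin n → ZMod p) = (f ^ k) (v : Fin n → ZMod p) := by
    intro k v
    rw [hy₀, restrictAuto_pow_apply, equivPowApply]
  have hy₀P : y₀ ^ P = 1 := by
    refine LinearEquiv.ext fun v => ?_
    refine Subtype.ext ?_
    rw [hy₀pow P v]
    have hv : (g - 1) (v : Fin n → ZMod p) = 0 := v.2
    rw [LinearMap.sub_apply] at hv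
    have hgv : g (v : Fin n → ZMod p) = (v : Fin n → ZMod p) := by
      have := sub_eq_zero.mp hv
      simpa using this
    exact hgv
  by_cases hcase : y₀ ^ (p ^ (a - 1)) = 1
  · -- CASE 2 : the p-part lives on V1
    set ξ : ↥V1 ≃ₗ[ZMod p] ↥V1 := restrictAuto x V1 hsub1 with hξ
    have hξpow : ∀ (k : ℕ) (v : ↥V1),
        ((ξ ^ k) v : Fin n → ZMod p) = (f ^ k) (v : Fin n → ZMod p) := by
      intro k v
      rw [hξ, restrictAuto_pow_apply, equivPowApply]
    have hξd : ξ ^ d = 1 := by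
      refine LinearEquiv.ext fun v => ?_
      refine Subtype.ext ?_
      rw [hξpow d v, hfd]
      rfl
    set ξl : ↥V1 →ₗ[ZMod p] ↥V1 := (ξ : ↥V1 →ₗ[ZMod p] ↥V1) with hξl
    set N : Module.End (ZMod p) ↥V1 := ξl ^ m - 1 with hN
    have hcoeN : ((ξ ^ m : ↥V1 ≃ₗ[ZMod p] ↥V1) : ↥V1 →ₗ[ZMod p] ↥V1) - LinearMap.id = N := by
      rw [coePow, hN]
      rfl
    have hcoepow : ∀ k : ℕ, ((ξ ^ k : ↥V1 ≃ₗ[ZMod p] ↥V1) : ↥V1 →ₗ[ZMod p] ↥V1) = ξl ^ k :=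
      fun k => coePow ξ k
    have hNpow : ∀ e : ℕ, N ^ (p ^ e) = ξl ^ (m * p ^ e) - 1 := by
      intro e
      rw [hN, sub_one_pow_prime_pow (ξl ^ m) e, ← pow_mul]
    have hNP : N ^ P = 0 := by
      rw [hP, hNpow a, ← hP]
      have h1 : ξl ^ (m * P) = 1 := by
        have h2 : ξ ^ (m * P) = 1 := by
          rw [mul_comm m P, ← hd, hξd]
        rw [← hcoepow, h2]
        rfl
      rw [h1, sub_self]
    have hNpa1 : N ^ (p ^ (a - 1)) ≠ 0 := by
      intro h0
      rw [hNpow (a - 1)] at h0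
      have hfix1 : ∀ v ∈ V1, (f ^ (m * p ^ (a - 1))) v = v := by
        intro v hv
        have h1 : (ξl ^ (m * p ^ (a - 1))) ⟨v, hv⟩ = ⟨v, hv⟩ := by
          have := sub_eq_zero.mp h0
          rw [this]
          rfl
        have h2 : ((ξ ^ (m * p ^ (a - 1))) ⟨v, hv⟩ : Fin n → ZMod p) = v := by
          rw [← hcoepow (m * p ^ (a - 1))] at h1
          exact congrArg Subtype.val h1
        rw [hξpow (m * p ^ (a - 1)) ⟨v, hv⟩] at h2
        exact h2
      have hfix0 : ∀ v ∈ V0, (f ^ (m * p ^ (a - 1))) v = v := by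
        intro v hv
        have h1 : (f ^ (p ^ (a - 1))) v = v := by
          have h2 := congrArg (fun z => (z ⟨v, hv⟩ : Fin n → ZMod p)) hcase
          rw [hy₀pow (p ^ (a - 1)) ⟨v, hv⟩] at h2
          exact h2
        have h3 := fixedPow (f ^ (p ^ (a - 1))) h1 m
        rw [← pow_mul, mul_comm] at h3
        exact h3
      have hft : x ^ (m * p ^ (a - 1)) = 1 := by
        refine LinearEquiv.ext fun v => ?_
        rw [equivPowApply]
        exact hglue _ hfix0 hfix1 v
      have hdvd := hxdvd _ hft
      have hlt : m * p ^ (a - 1) < d := by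
        rw [hd, hP]
        have h' : p ^ (a - 1) < p ^ a := Nat.pow_lt_pow_right hp.one_lt (by omega)
        calc m * p ^ (a - 1) = p ^ (a - 1) * m := mul_comm _ _
          _ < p ^ a * m := mul_lt_mul_of_pos_right h' hm0
      have hne0 : 0 < m * p ^ (a - 1) := Nat.mul_pos hm0 (pow_pos hp.pos _)
      exact absurd (Nat.le_of_dvd hne0 hdvd) (by omega)
    have hordu : orderOf (ξ ^ m) = P := by
      have hdvdP : orderOf (ξ ^ m) ∣ p ^ a := by
        refine orderOf_dvd_of_pow_eq_one ?_
        rw [← pow_mul, mul_comm m (p ^ a), ← hP, ← hd, hξd]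
      obtain ⟨b, hb, hbe⟩ := (Nat.dvd_prime_pow hp).mp hdvdP
      have hba : b = a := by
        by_contra hne
        have hble : b ≤ a - 1 := by omega
        have h1 : (ξ ^ m) ^ (p ^ (a - 1)) = 1 := by
          refine orderOf_dvd_iff_pow_eq_one.mp ?_
          rw [hbe]
          exact pow_dvd_pow p hble
        refine hNpa1 ?_
        rw [hNpow (a - 1)]
        have h2 : ξl ^ (m * p ^ (a - 1)) = 1 := by
          rw [← hcoepow (m * p ^ (a - 1)), pow_mul, h1]
          rfl
        rw [h2, sub_self]
      rw [hbe, hba, hP]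
    have hrankN : mustar p P ≤ finrank (ZMod p) ↥(range N) := by
      have h := mustar_le_rank (ξ ^ m)
      rw [hordu, hcoeN] at h
      exact h
    -- the kernel of N
    set C : Submodule (ZMod p) ↥V1 := ker N with hC
    set s' : ↥V1 ≃ₗ[ZMod p] ↥V1 := ξ ^ P with hs'
    have hs'sub : ∀ v ∈ C, (s' : ↥V1 →ₗ[ZMod p] ↥V1) v ∈ C := by
      intro v hv
      have hv' : N v = 0 := hv
      show N ((s' : ↥V1 →ₗ[ZMod p] ↥V1) v) = 0
      rw [hs', hcoepow P]
      have hcm : N * ξl ^ P = ξl ^ P * N := by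
        rw [hN]
        exact commSub ξl m P
      have h1 : N ((ξl ^ P) v) = (N * ξl ^ P) v := rfl
      rw [h1, hcm]
      show (ξl ^ P) (N v) = 0
      rw [hv', map_zero]
    set y : ↥C ≃ₗ[ZMod p] ↥C := restrictAuto s' C hs'sub with hy
    have hypow : ∀ (k : ℕ) (v : ↥C), ((y ^ k) v : ↥V1) = (s' ^ k) (v : ↥V1) := by
      intro k v
      rw [hy, restrictAuto_pow_apply]
    have hs'm : s' ^ m = 1 := by
      rw [hs', ← pow_mul, ← hd, hξd]
    have hym : y ^ m = 1 := by
      refine LinearEquiv.ext fun v => ?_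
      refine Subtype.ext ?_
      rw [hypow m v, hs'm]
      rfl
    have hmdvd : m ∣ orderOf y := by
      set j := orderOf y with hj
      have hyj : y ^ j = 1 := pow_orderOf_eq_one y
      set T : Module.End (ZMod p) ↥V1 := ξl ^ (P * j) - 1 with hT
      have hTm : (ξl ^ (P * j)) ^ m = 1 := by
        rw [← pow_mul]
        have h1 : ξ ^ (P * j * m) = 1 := by
          rw [mul_right_comm, ← hd, pow_mul, hξd, one_pow]
        rw [← hcoepow, h1]
        rfl
      have hkerT : ker T ⊓ range T = ⊥ := ker_inf_range_eq_bot _ m hmK hTm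
      have hTC : ∀ v : ↥V1, v ∈ C → T v = 0 := by
        intro v hv
        have h1 : (s' ^ j) v = v := by
          have h2 := congrArg (fun z => (z ⟨v, hv⟩ : ↥V1)) hyj
          rw [hypow j ⟨v, hv⟩] at h2
          exact h2
        have h3 : (ξl ^ (P * j)) v = v := by
          rw [← hcoepow (P * j), pow_mul]
          exact h1
        rw [hT, LinearMap.sub_apply, h3]
        simp
      have hNT : N * T = T * N := by
        rw [hN, hT]
        exact commSubSub ξl m (P * j)
      have hkill : ∀ (k : ℕ) (v : ↥V1), v ∈ range T → (N ^ k) v = 0 → v = 0 := by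
        intro k
        induction k with
        | zero => intro v _ h0; simpa using h0
        | succ k' ih =>
          intro v hv h0
          have hNv_mem : N v ∈ range T := by
            obtain ⟨w, hw⟩ := hv
            refine ⟨N w, ?_⟩
            have h1 : T (N w) = (T * N) w := rfl
            rw [h1, ← hNT]
            show N (T w) = N v
            rw [hw]
          have h0' : (N ^ k') (N v) = 0 := by
            have h1 : (N ^ k') (N v) = (N ^ (k' + 1)) v := by
              rw [pow_succ]
              rfl
            rw [h1, h0]
          have hNv0 : N v = 0 := ih (N v) hNv_mem h0'
          have hvC : v ∈ C := hNv0
          have h2 : v ∈ ker T ⊓ range T := ⟨hTC v hvC, hv⟩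
          rw [hkerT] at h2
          exact h2
      have hT0 : T = 0 := by
        refine LinearMap.ext fun v => ?_
        have h1 : (N ^ P) (T v) = 0 := by
          rw [hNP]
          rfl
        exact hkill P (T v) ⟨v, rfl⟩ h1
      have hξPj : ξ ^ (P * j) = 1 := by
        apply LinearEquiv.toLinearMap_injective
        rw [hcoepow (P * j)]
        have := sub_eq_zero.mp (by rw [← hT]; exact hT0 : ξl ^ (P * j) - 1 = 0)
        rw [this]
        rfl
      have hfix1 : ∀ v ∈ V1, (f ^ (P * j)) v = v := by
        intro v hv
        have h1 : ((ξ ^ (P * j)) ⟨v, hv⟩ : Fin n → ZMod p) = v := by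
          rw [hξPj]
          rfl
        rw [hξpow (P * j) ⟨v, hv⟩] at h1
        exact h1
      have hfix0 : ∀ v ∈ V0, (f ^ (P * j)) v = v := by
        intro v hv
        have hv' : (g - 1) v = 0 := hv
        have hgv : g v = v := by
          rw [LinearMap.sub_apply] at hv'
          have := sub_eq_zero.mp hv'
          simpa using this
        have h3 := fixedPow g hgv j
        rw [hg, ← pow_mul] at h3
        exact h3
      have hft : x ^ (P * j) = 1 := by
        refine LinearEquiv.ext fun v => ?_
        rw [equivPowApply]
        exact hglue _ hfix0 hfix1 v
      have hdvd := hxdvd _ hft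
      rw [hd] at hdvd
      exact (Nat.mul_dvd_mul_iff_left hP0).mp hdvd
    have hordy : orderOf y = m := Nat.dvd_antisymm (orderOf_dvd_of_pow_eq_one hym) hmdvd
    have hrankC : mustar p m ≤ finrank (ZMod p) ↥C := by
      have h := mustar_le_rank y
      rw [hordy] at h
      exact le_trans h (LinearMap.finrank_range_le _)
    have hdimV1 : finrank (ZMod p) ↥(range N) + finrank (ZMod p) ↥C =
        finrank (ZMod p) ↥V1 := LinearMap.finrank_range_add_finrank_ker N
    have := add_le_add hrankN hrankC
    omega
  · -- CASE 1 : x restricted to V0 has order exactly P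
    have hordy₀ : orderOf y₀ = P := by
      have hdvdP : orderOf y₀ ∣ p ^ a := by
        rw [← hP]
        exact orderOf_dvd_of_pow_eq_one hy₀P
      obtain ⟨b, hb, hbe⟩ := (Nat.dvd_prime_pow hp).mp hdvdP
      have hba : b = a := by
        by_contra hne
        have hble : b ≤ a - 1 := by omega
        refine hcase (orderOf_dvd_iff_pow_eq_one.mp ?_)
        rw [hbe]
        exact pow_dvd_pow p hble
      rw [hbe, hba, hP]
    have h0 : mustar p P ≤
        finrank (ZMod p) ↥(range ((y₀ : ↥V0 →ₗ[ZMod p] ↥V0) - LinearMap.id)) := by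
      have h := mustar_le_rank y₀
      rwa [hordy₀] at h
    have hmapsub : Submodule.map V0.subtype
        (range ((y₀ : ↥V0 →ₗ[ZMod p] ↥V0) - LinearMap.id)) = M0 := by
      rw [← LinearMap.range_comp]
      have hcomp : V0.subtype ∘ₗ ((y₀ : ↥V0 →ₗ[ZMod p] ↥V0) - LinearMap.id) =
          (f - 1) ∘ₗ V0.subtype := by
        refine LinearMap.ext fun v => ?_
        show ((y₀ v : Fin n → ZMod p) - (v : Fin n → ZMod p)) = (f - 1) (v : Fin n → ZMod p)
        rw [hy₀, restrictAuto_apply]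
        rfl
      rw [hcomp, LinearMap.range_comp, Submodule.range_subtype]
    have hfr0 : finrank (ZMod p) ↥(range ((y₀ : ↥V0 →ₗ[ZMod p] ↥V0) - LinearMap.id)) =
        finrank (ZMod p) ↥M0 := by
      rw [← hmapsub, Submodule.finrank_map_subtype_eq]
    rw [hfr0] at h0
    have := add_le_add h0 hV1rank
    omega

end Lower


/-- `μ*(d,p) = μ*(d_p,p) + μ*(d_{p'},p)` where `d_p` is the `p`-part of `d` and
`d_{p'} = d / d_p` is the `p'`-part. -/
theorem mustar_p_part_decomposition (p d : ℕ) (hp : p.Prime) (hd : 2 ≤ d) :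
    mustar p d = mustar p (p ^ (d.factorization p)) + mustar p (d / p ^ (d.factorization p)) := by
  haveI := Fact.mk hp
  have hd0 : d ≠ 0 := by omega
  have h1 : mustar p 1 = 0 := by
    apply Nat.sInf_eq_zero.mpr
    left
    refine ⟨0, 1, orderOf_one, ?_⟩
    have hle := Submodule.finrank_le (range
      (((1 : (Fin 0 → ZMod p) ≃ₗ[ZMod p] (Fin 0 → ZMod p)) :
        (Fin 0 → ZMod p) →ₗ[ZMod p] (Fin 0 → ZMod p)) - LinearMap.id))
    have h0 : finrank (ZMod p) (Fin 0 → ZMod p) = 0 := by simp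
    omega
  rcases Nat.eq_zero_or_pos (d.factorization p) with ha | ha
  · rw [ha, pow_zero, Nat.div_one, h1, zero_add]
  · set a := d.factorization p with hA
    set P := p ^ a with hP
    set m := d / P with hm
    have hPd : P ∣ d := Nat.ordProj_dvd d p
    have hdPm : d = P * m := (Nat.mul_div_cancel' hPd).symm
    have hpm : ¬ p ∣ m := Nat.not_dvd_ordCompl hp hd0
    have hm1 : 1 ≤ m := Nat.ordCompl_pos p hd0
    have hcop : Nat.Coprime P m := (Nat.coprime_ordCompl hp hd0).pow_left a
    have hP1 : 1 ≤ P := Nat.one_le_iff_ne_zero.mpr (pow_ne_zero a hp.pos.ne')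
    apply le_antisymm
    · have := mustar_mul_le (p := p) P m hP1 hm1 hcop
      rwa [← hdPm] at this
    · rw [mustar_eq_sInf p d]
      apply le_csInf (mustarSet_nonempty p d (by omega))
      rintro μ ⟨n, x, hord, hrank⟩
      rw [← hrank]
      exact lower_bound ha hm1 hpm x (by rw [hord, hdPm])
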